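/- Let W = m_1P_1 + ⋯ + m_sP_s be a fat point scheme in P^n with support X and slimming Y = (m_1−1)P_1 + ⋯ + (m_s−1)P_s. Then there exists i_0 ∈ ℕ such that (I_W)_i = (I_X · I_Y)_i for all i ≥ i_0. -/

import Mathlib

open MvPolynomial

/-- The homogeneous vanishing ideal of the `K`-rational point of `ℙ^n` with homogeneous
coordinates `v`. -/
noncomputable def pointIdeal {K : Type*} [Field K] {n : ℕ} (v : Fin (n + 1) → K) :
    Ideal (MvPolynomial (Fin (n + 1)) K) :=
  Ideal.span {F | (∃ d, F.IsHomogeneous d) ∧ MvPolynomial.eval v F = 0}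

attribute [local instance] MvPolynomial.gradedAlgebra


open MvPolynomial

section IdealAux
variable {R : Type*} [CommRing R]

lemma ideal_prod_le_prod {ι : Type*} {t : Finset ι} {f g : ι → Ideal R}
    (h : ∀ k ∈ t, f k ≤ g k) : ∏ k ∈ t, f k ≤ ∏ k ∈ t, g k := by
  classical
  induction t using Finset.induction_on with
  | empty => simp
  | @insert a t ha ih =>
      rw [Finset.prod_insert ha, Finset.prod_insert ha]
      exact Ideal.mul_mono (h _ (Finset.mem_insert_self _ _))
        (ih fun k hk => h k (Finset.mem_insert_of_mem hk))

lemma ideal_sum_le {ι : Type*} {t : Finset ι} {f : ι → Ideal R} {J : Ideal R}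
    (h : ∀ k ∈ t, f k ≤ J) : ∑ k ∈ t, f k ≤ J := by
  classical
  induction t using Finset.induction_on with
  | empty => simp
  | @insert a t ha ih =>
      rw [Finset.sum_insert ha, Submodule.add_eq_sup]
      exact sup_le (h _ (Finset.mem_insert_self _ _))
        (ih fun k hk => h k (Finset.mem_insert_of_mem hk))

lemma ideal_add_pow_le (p q : Ideal R) : ∀ (t a b : ℕ), a + b ≤ t → (p + q) ^ t ≤ p ^ a + q ^ b := by
  intro t
  induction t with
  | zero =>
      intro a b hab
      have ha : a = 0 := by omega
      have hb : b = 0 := by omega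
      subst ha; subst hb
      simp [Ideal.one_eq_top]
  | succ t ih =>
      intro a b hab
      match a, b with
      | 0, b =>
          have : p ^ 0 + q ^ b = ⊤ := by
            rw [pow_zero, Ideal.one_eq_top, Submodule.add_eq_sup, top_sup_eq]
          rw [this]; exact le_top
      | a + 1, 0 =>
          have : p ^ (a+1) + q ^ 0 = ⊤ := by
            rw [pow_zero, Ideal.one_eq_top, Submodule.add_eq_sup, sup_top_eq]
          rw [this]; exact le_top
      | a + 1, b + 1 =>
          have h1 : (p + q) ^ t ≤ p ^ a + q ^ (b+1) := ih a (b+1) (by omega)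
          have h2 : (p + q) ^ t ≤ p ^ (a+1) + q ^ b := ih (a+1) b (by omega)
          rw [pow_succ, mul_add, Submodule.add_eq_sup]
          apply sup_le
          · calc (p + q) ^ t * p ≤ (p ^ a + q ^ (b+1)) * p := Ideal.mul_mono_left h1
              _ = p ^ a * p + q ^ (b+1) * p := add_mul _ _ _
              _ ≤ p ^ (a+1) + q ^ (b+1) := by
                  rw [← pow_succ, Submodule.add_eq_sup, Submodule.add_eq_sup]
                  exact sup_le_sup le_rfl Ideal.mul_le_left
          · calc (p + q) ^ t * q ≤ (p ^ (a+1) + q ^ b) * q := Ideal.mul_mono_left h2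
              _ = p ^ (a+1) * q + q ^ b * q := add_mul _ _ _
              _ ≤ p ^ (a+1) + q ^ (b+1) := by
                  rw [← pow_succ, Submodule.add_eq_sup, Submodule.add_eq_sup]
                  exact sup_le_sup Ideal.mul_le_left le_rfl

lemma ideal_prod_add_le {ι : Type*} (a : Ideal R) (b : ι → Ideal R) (t : Finset ι) :
    (∏ k ∈ t, (a + b k)) ≤ a + ∏ k ∈ t, b k := by
  classical
  induction t using Finset.induction_on with
  | empty => simp
  | @insert i t hi ih =>
      rw [Finset.prod_insert hi, Finset.prod_insert hi]
      calc (a + b i) * ∏ k ∈ t, (a + b k) ≤ (a + b i) * (a + ∏ k ∈ t, b k) :=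
            Ideal.mul_mono_right ih
        _ = (a * a + a * ∏ k ∈ t, b k) + (b i * a + b i * ∏ k ∈ t, b k) := by ring
        _ ≤ a + b i * ∏ k ∈ t, b k := by
            rw [Submodule.add_eq_sup, Submodule.add_eq_sup, Submodule.add_eq_sup,
              Submodule.add_eq_sup]
            apply sup_le (sup_le _ _) (sup_le _ _)
            · exact le_sup_of_le_left Ideal.mul_le_right
            · exact le_sup_of_le_left Ideal.mul_le_left
            · exact le_sup_of_le_left Ideal.mul_le_right
            · exact le_sup_right

lemma ideal_sum_prod {ι : Type*} [DecidableEq ι] (M : Ideal R) (q : ι → Ideal R) (e : ℕ)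
    (hq : ∀ j k, j ≠ k → M ^ e ≤ q j + q k) (t : Finset ι) (ht : t.Nonempty) :
    ∃ N, M ^ N ≤ ∑ j ∈ t, ∏ k ∈ t.erase j, q k := by
  induction ht using Finset.Nonempty.cons_induction with
  | singleton a =>
      refine ⟨0, ?_⟩
      simp [Ideal.one_eq_top]
  | cons a t ha ht ih =>
      obtain ⟨N', hN'⟩ := ih
      refine ⟨e * t.card + N', ?_⟩
      rw [Finset.cons_eq_insert]
      have hrhs : ∑ j ∈ insert a t, ∏ k ∈ (insert a t).erase j, q k
          = (∏ k ∈ t, q k) + q a * ∑ j ∈ t, ∏ k ∈ t.erase j, q k := by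
        rw [Finset.sum_insert ha, Finset.erase_insert ha, Finset.mul_sum]
        congr 1
        apply Finset.sum_congr rfl
        intro j hj
        have hne : a ≠ j := fun h => ha (h ▸ hj)
        rw [Finset.erase_insert_of_ne hne, Finset.prod_insert (fun h => ha (Finset.erase_subset _ _ h))]
      rw [hrhs]
      calc M ^ (e * t.card + N') = (M ^ e) ^ t.card * M ^ N' := by rw [pow_add, pow_mul]
        _ ≤ (∏ k ∈ t, (q a + q k)) * (∑ j ∈ t, ∏ k ∈ t.erase j, q k) := by
            apply Ideal.mul_mono _ hN'
            rw [← Finset.prod_const]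
            exact ideal_prod_le_prod fun k hk => hq a k (fun h => ha (h ▸ hk))
        _ ≤ (q a + ∏ k ∈ t, q k) * (∑ j ∈ t, ∏ k ∈ t.erase j, q k) :=
            Ideal.mul_mono_left (ideal_prod_add_le _ _ _)
        _ = q a * (∑ j ∈ t, ∏ k ∈ t.erase j, q k)
            + (∏ k ∈ t, q k) * (∑ j ∈ t, ∏ k ∈ t.erase j, q k) := add_mul _ _ _
        _ ≤ (∏ k ∈ t, q k) + q a * ∑ j ∈ t, ∏ k ∈ t.erase j, q k := by
            rw [Submodule.add_eq_sup, Submodule.add_eq_sup]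
            exact sup_le le_sup_right (le_sup_of_le_left Ideal.mul_le_left)

end IdealAux


section Graded
variable {K : Type*} [Field K] {n : ℕ}

local notation "𝒜" => homogeneousSubmodule (Fin (n+1)) K

lemma decompose_coe_eq (φ : MvPolynomial (Fin (n+1)) K) (i : ℕ) :
    (DirectSum.decompose 𝒜 φ i : MvPolynomial (Fin (n+1)) K) = homogeneousComponent i φ :=
  MvPolynomial.decomposition.decompose'_apply φ i

lemma pointIdeal_isHomogeneous (v : Fin (n+1) → K) :
    (pointIdeal v).IsHomogeneous 𝒜 :=
  Ideal.homogeneous_span _ _ fun _ hx =>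
    (hx.1).imp fun _ hd => (mem_homogeneousSubmodule _ _).2 hd

lemma isHomogeneous_pow {I : Ideal (MvPolynomial (Fin (n+1)) K)}
    (h : I.IsHomogeneous 𝒜) (k : ℕ) : (I ^ k).IsHomogeneous 𝒜 := by
  induction k with
  | zero => rw [pow_zero, Ideal.one_eq_top]; exact fun _ _ _ => Submodule.mem_top
  | succ k ih => rw [pow_succ]; exact ih.mul h

noncomputable def irrIdeal (K : Type*) [Field K] (n : ℕ) : Ideal (MvPolynomial (Fin (n+1)) K) :=
  Ideal.span (Set.range X)

lemma monomial_mem_irr_pow (d : Fin (n+1) →₀ ℕ) (c : K) :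
    monomial d c ∈ irrIdeal K n ^ (Finsupp.degree d) := by
  induction d using Finsupp.induction with
  | zero => simp [Ideal.one_eq_top]
  | single_add a b f haf hb ih =>
      have hsingle : Finsupp.degree (Finsupp.single a b) = b := by
        exact Finsupp.degree_single a b
      have hdeg : Finsupp.degree (Finsupp.single a b + f) = b + Finsupp.degree f := by
        rw [Finsupp.degree_eq_weight_one, map_add, ← Finsupp.degree_eq_weight_one, hsingle]
      have hXa : X a ∈ irrIdeal K n := Ideal.subset_span (Set.mem_range_self a)
      rw [hdeg, monomial_single_add, pow_add]
      exact Ideal.mul_mem_mul (Ideal.pow_mem_pow hXa b) ih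

lemma homog_mem_irr_pow {F : MvPolynomial (Fin (n+1)) K} {e N : ℕ}
    (hF : F.IsHomogeneous e) (hN : N ≤ e) : F ∈ irrIdeal K n ^ N := by
  rw [F.as_sum]
  apply Ideal.sum_mem
  intro d hd
  have hdeg : Finsupp.degree d = e := by
    rw [Finsupp.degree_eq_weight_one]; exact hF (mem_support_iff.1 hd)
  exact Ideal.pow_le_pow_right (hdeg ▸ hN) (monomial_mem_irr_pow d _)

end Graded

section Lin
variable {K : Type*} [Field K] {n : ℕ}

noncomputable def linPoly (c : Fin (n+1) → K) : MvPolynomial (Fin (n+1)) K :=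
  ∑ t, C (c t) * X t

lemma linPoly_isHomogeneous (c : Fin (n+1) → K) : (linPoly c).IsHomogeneous 1 :=
  IsHomogeneous.sum _ _ _ fun t _ => isHomogeneous_C_mul_X _ _

lemma eval_linPoly (c w : Fin (n+1) → K) : eval w (linPoly c) = ∑ t, c t * w t := by
  simp [linPoly]

lemma linPoly_mem {c w : Fin (n+1) → K} (h : ∑ t, c t * w t = 0) :
    linPoly c ∈ pointIdeal w :=
  Ideal.subset_span ⟨⟨1, linPoly_isHomogeneous c⟩, by rw [eval_linPoly, h]⟩

lemma linPoly_add (c d : Fin (n+1) → K) : linPoly (c + d) = linPoly c + linPoly d := by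
  simp [linPoly, add_mul, Finset.sum_add_distrib]

lemma linPoly_single (i : Fin (n+1)) :
    linPoly (fun j => if i = j then (1:K) else 0) = X i := by
  rw [linPoly, Finset.sum_eq_single_of_mem i (Finset.mem_univ i)]
  · simp
  · intro t _ hti
    rw [if_neg (fun h => hti h.symm)]
    simp

lemma sum_delta_mul (i : Fin (n+1)) (w : Fin (n+1) → K) :
    ∑ t, (if i = t then (1:K) else 0) * w t = w i := by
  rw [Finset.sum_eq_single_of_mem i (Finset.mem_univ i)]
  · simp
  · intro t _ hti
    rw [if_neg (fun h => hti h.symm), zero_mul]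

lemma irr_le_pair (w1 w2 : Fin (n+1) → K) (h1 : w1 ≠ 0)
    (hnp : ∀ c : K, w2 ≠ c • w1) :
    Ideal.span (Set.range X) ≤ pointIdeal w1 + pointIdeal w2 := by
  classical
  have li : LinearIndependent K ![w1, w2] :=
    (LinearIndependent.pair_iff' h1).2 fun a ha => hnp a ha.symm
  have lis := (linearIndepOn_id_range_iff li.injective).2 li
  have hw1 : w1 ∈ lis.extend (Set.subset_univ _) :=
    lis.subset_extend _ ⟨0, rfl⟩
  have hw2 : w2 ∈ lis.extend (Set.subset_univ _) :=
    lis.subset_extend _ ⟨1, rfl⟩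
  have hne : w1 ≠ w2 := fun h => hnp 1 (by rw [one_smul]; exact h.symm)
  obtain ⟨φ, hφ1, hφ2⟩ : ∃ φ : (Fin (n+1) → K) →ₗ[K] K, φ w1 = 1 ∧ φ w2 = 0 := by
    set B := Module.Basis.extend lis with hB
    set g : lis.extend (Set.subset_univ _) → K :=
      fun x => if (x : Fin (n+1) → K) = w2 then 0 else
        if (x : Fin (n+1) → K) = w1 then 1 else 0 with hg
    refine ⟨B.constr K g, ?_, ?_⟩
    · have h := B.constr_basis K g ⟨w1, hw1⟩
      rw [Module.Basis.extend_apply_self] at h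
      rw [h, hg]
      simp [hne]
    · have h := B.constr_basis K g ⟨w2, hw2⟩
      rw [Module.Basis.extend_apply_self] at h
      rw [h, hg]
      simp
  rw [Ideal.span_le]
  rintro _ ⟨i, rfl⟩
  set b : Fin (n+1) → K := fun t => w1 i * φ (fun j => if t = j then 1 else 0) with hb
  have hφsum : ∀ w : Fin (n+1) → K, ∑ t, b t * w t = w1 i * φ w := by
    intro w
    conv_rhs => rw [pi_eq_sum_univ w, map_sum, Finset.mul_sum]
    apply Finset.sum_congr rfl
    intro t _
    rw [hb, map_smul, smul_eq_mul]
    ring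
  have hmem2 : linPoly b ∈ pointIdeal w2 := linPoly_mem (by rw [hφsum, hφ2, mul_zero])
  have hmem1 : linPoly ((fun j => if i = j then (1:K) else 0) - b) ∈ pointIdeal w1 := by
    apply linPoly_mem
    have hsplit : ∑ t, ((fun j => if i = j then (1:K) else 0) - b) t * w1 t
        = (∑ t, (if i = t then (1:K) else 0) * w1 t) - ∑ t, b t * w1 t := by
      rw [← Finset.sum_sub_distrib]
      apply Finset.sum_congr rfl
      intro t _
      rw [Pi.sub_apply, sub_mul]
    rw [hsplit, hφsum, hφ1, mul_one, sum_delta_mul, sub_self]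
  have hX : X i = linPoly ((fun j => if i = j then (1:K) else 0) - b) + linPoly b := by
    rw [← linPoly_add]
    have : (fun j => if i = j then (1:K) else 0) - b + b = fun j => if i = j then (1:K) else 0 := by
      funext t; simp
    rw [this, linPoly_single]
  rw [SetLike.mem_coe, Submodule.add_eq_sup, hX]
  exact Submodule.add_mem_sup hmem1 hmem2

end Lin


/-- Let `W = m_1 P_1 + ⋯ + m_s P_s` be a fat point scheme in `ℙ^n` with
support `X` and slimming `Y = (m_1 - 1) P_1 + ⋯ + (m_s - 1) P_s`. Then there exists
`i₀ ∈ ℕ` such that `(I_W)_i = (I_X · I_Y)_i` for all `i ≥ i₀`. -/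
theorem fatPoint_eq_support_mul_slimming_in_large_degrees {K : Type*} [Field K]
    (n s : ℕ) (hs : 0 < s)
    (v : Fin s → (Fin (n + 1) → K))
    (hv0 : ∀ j, v j ≠ 0)
    (hdist : ∀ i j, i ≠ j → ∀ c : K, v i ≠ c • v j)
    (m : Fin s → ℕ) (hm : ∀ j, 1 ≤ m j) :
    ∃ i₀ : ℕ, ∀ i ≥ i₀, ∀ F : MvPolynomial (Fin (n + 1)) K, F.IsHomogeneous i →
      (F ∈ (⨅ j, (pointIdeal (v j)) ^ (m j)) ↔
        F ∈ (⨅ j, pointIdeal (v j)) * (⨅ j, (pointIdeal (v j)) ^ (m j - 1))) := by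
  classical
  haveI : Nonempty (Fin s) := ⟨⟨0, hs⟩⟩
  have hJle : (⨅ j, pointIdeal (v j)) * (⨅ j, (pointIdeal (v j)) ^ (m j - 1))
      ≤ ⨅ j, (pointIdeal (v j)) ^ (m j) := by
    apply le_iInf; intro j
    calc (⨅ j, pointIdeal (v j)) * (⨅ j, (pointIdeal (v j)) ^ (m j - 1))
        ≤ pointIdeal (v j) * pointIdeal (v j) ^ (m j - 1) :=
          Ideal.mul_mono (iInf_le _ j) (iInf_le _ j)
      _ = pointIdeal (v j) ^ m j := by
          rw [← pow_succ']; congr 1; have := hm j; omega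
  set c := Finset.univ.sup m with hcdef
  have hmc : ∀ j, m j ≤ c := fun j => Finset.le_sup (Finset.mem_univ j)
  have hc1 : 1 ≤ c := le_trans (hm ⟨0, hs⟩) (hmc _)
  have hpair : ∀ j k : Fin s, j ≠ k →
      (irrIdeal K n) ^ (2*c) ≤ pointIdeal (v j) ^ c + pointIdeal (v k) ^ c := by
    intro j k hjk
    calc irrIdeal K n ^ (2*c) ≤ (pointIdeal (v j) + pointIdeal (v k)) ^ (2*c) :=
        Ideal.pow_right_mono
          (irr_le_pair (v j) (v k) (hv0 j) (hdist k j (Ne.symm hjk))) _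
      _ ≤ pointIdeal (v j) ^ c + pointIdeal (v k) ^ c :=
        ideal_add_pow_le _ _ _ _ _ (by omega)
  obtain ⟨N, hN⟩ := ideal_sum_prod (irrIdeal K n) (fun j => pointIdeal (v j) ^ c) (2*c) hpair
    Finset.univ Finset.univ_nonempty
  have hTj : ∀ j : Fin s,
      (∏ k ∈ Finset.univ.erase j, pointIdeal (v k) ^ c) * pointIdeal (v j) ^ m j
      ≤ (⨅ j, pointIdeal (v j)) * (⨅ j, (pointIdeal (v j)) ^ (m j - 1)) := by
    intro j
    have hsplit : (∏ k ∈ Finset.univ.erase j, pointIdeal (v k) ^ c) * pointIdeal (v j) ^ m j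
        = (pointIdeal (v j) * ∏ k ∈ Finset.univ.erase j, pointIdeal (v k)) *
          ((pointIdeal (v j)) ^ (m j - 1) * ∏ k ∈ Finset.univ.erase j, pointIdeal (v k) ^ (c - 1)) := by
      have e1 : ∀ k ∈ Finset.univ.erase j,
          pointIdeal (v k) ^ c = pointIdeal (v k) * pointIdeal (v k) ^ (c-1) := by
        intro k _; rw [← pow_succ']; congr 1; omega
      have e2 : pointIdeal (v j) ^ m j = pointIdeal (v j) * pointIdeal (v j) ^ (m j - 1) := by
        rw [← pow_succ']; congr 1; have := hm j; omega
      rw [Finset.prod_congr rfl e1, Finset.prod_mul_distrib, e2]; ring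
    rw [hsplit]
    apply Ideal.mul_mono
    · rw [Finset.mul_prod_erase Finset.univ (fun k => pointIdeal (v k)) (Finset.mem_univ j)]
      exact le_iInf fun k =>
        le_trans Ideal.prod_le_inf (Finset.inf_le (Finset.mem_univ k))
    · apply le_iInf; intro k
      by_cases hkj : k = j
      · subst hkj; exact Ideal.mul_le_left
      · calc (pointIdeal (v j)) ^ (m j - 1) * ∏ k ∈ Finset.univ.erase j, pointIdeal (v k) ^ (c - 1)
            ≤ ∏ k ∈ Finset.univ.erase j, pointIdeal (v k) ^ (c-1) := Ideal.mul_le_right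
          _ ≤ pointIdeal (v k) ^ (c-1) :=
            le_trans Ideal.prod_le_inf
              (Finset.inf_le (Finset.mem_erase.2 ⟨hkj, Finset.mem_univ k⟩))
          _ ≤ pointIdeal (v k) ^ (m k - 1) :=
            Ideal.pow_le_pow_right (by have := hmc k; omega)
  have hMN : irrIdeal K n ^ N * (⨅ j, (pointIdeal (v j)) ^ (m j))
      ≤ (⨅ j, pointIdeal (v j)) * (⨅ j, (pointIdeal (v j)) ^ (m j - 1)) := by
    calc irrIdeal K n ^ N * (⨅ j, (pointIdeal (v j)) ^ (m j))
        ≤ (∑ j : Fin s, ∏ k ∈ Finset.univ.erase j, pointIdeal (v k) ^ c) *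
            (⨅ j, (pointIdeal (v j)) ^ (m j)) := Ideal.mul_mono_left hN
      _ = ∑ j : Fin s, (∏ k ∈ Finset.univ.erase j, pointIdeal (v k) ^ c) *
            (⨅ j, (pointIdeal (v j)) ^ (m j)) := Finset.sum_mul _ _ _
      _ ≤ _ := ideal_sum_le fun j _ =>
            le_trans (Ideal.mul_mono_right (iInf_le _ j)) (hTj j)
  have hhom : (⨅ j, (pointIdeal (v j)) ^ (m j)).IsHomogeneous
      (homogeneousSubmodule (Fin (n+1)) K) :=
    Ideal.IsHomogeneous.iInf fun j => isHomogeneous_pow (pointIdeal_isHomogeneous (v j)) (m j)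
  obtain ⟨T, hT⟩ : (⨅ j, (pointIdeal (v j)) ^ (m j)).FG :=
    IsNoetherian.noetherian _
  refine ⟨N + T.sup totalDegree, fun i hi F hF => ⟨fun hFW => ?_, fun h => hJle h⟩⟩
  have hFspan : F ∈ Ideal.span (T : Set (MvPolynomial (Fin (n+1)) K)) := by
    rw [hT]; exact hFW
  obtain ⟨f, -, hf⟩ := Submodule.mem_span_finset.1 hFspan
  have hFc : homogeneousComponent i F = F := by
    rw [homogeneousComponent_of_mem ((mem_homogeneousSubmodule _ _).2 hF), if_pos rfl]
  rw [← hFc, ← hf, map_sum]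
  apply Ideal.sum_mem
  intro t ht
  rw [smul_eq_mul]
  have htW : t ∈ ⨅ j, (pointIdeal (v j)) ^ (m j) := by
    rw [← hT]; exact Ideal.subset_span ht
  have hsum : f t * t = ∑ e ∈ Finset.range (t.totalDegree + 1),
      f t * homogeneousComponent e t := by
    rw [← Finset.mul_sum, sum_homogeneousComponent]
  rw [hsum, map_sum]
  apply Ideal.sum_mem
  intro e he
  have heD : e ≤ T.sup totalDegree :=
    le_trans (Nat.lt_succ_iff.1 (Finset.mem_range.1 he)) (Finset.le_sup ht)
  have hte : homogeneousComponent e t ∈ homogeneousSubmodule (Fin (n+1)) K e :=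
    homogeneousComponent_mem e t
  have key : homogeneousComponent i (f t * homogeneousComponent e t)
      = homogeneousComponent (i - e) (f t) * homogeneousComponent e t := by
    have h2 := DirectSum.coe_decompose_mul_add_of_right_mem
      (homogeneousSubmodule (Fin (n+1)) K) (a := f t) (i := i - e) hte
    rw [decompose_coe_eq, decompose_coe_eq] at h2
    have hie : i - e + e = i := by omega
    rw [hie] at h2
    exact h2
  rw [key]
  have hcoef : homogeneousComponent (i-e) (f t) ∈ irrIdeal K n ^ N :=
    homog_mem_irr_pow (homogeneousComponent_isHomogeneous _ _) (by omega)
  have htmem : homogeneousComponent e t ∈ ⨅ j, (pointIdeal (v j)) ^ (m j) := by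
    have h3 := hhom e htW
    rwa [decompose_coe_eq] at h3
  exact hMN (Ideal.mul_mem_mul hcoef htmem)
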